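/- With u, σ, Φ as in the separated-bump example (u = Σ_{n≥2} n² log(e+n)^{-3} χ_{(eⁿ+n−1, eⁿ+n)}, σ = Σ_{n≥2} χ_{(eⁿ, eⁿ+1)}, Φ(t)=t log(e+t)²), there is a constant C such that for every bounded interval Q ⊂ ℝ: ‖u‖_{Φ,Q} · (|Q|^{-1} ∫_Q σ dx) ≤ C. That is, the separated bump quantity sup_Q ‖u‖_{Φ,Q} ‖σ‖_{1,Q} is finite. -/

import Mathlib

open MeasureTheory Real Set Filter

/-- The normalized Luxemburg (Orlicz) norm of `v` over the set `E`:
`inf { λ > 0 : μ(E)⁻¹ ∫_E A(|v|/λ) dμ ≤ 1 }`. -/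
noncomputable def luxNorm {X : Type*} [MeasurableSpace X] (μ : Measure X)
    (A : ℝ → ℝ) (E : Set X) (v : X → ℝ) : ℝ :=
  sInf {l : ℝ | 0 < l ∧ ∫⁻ x in E, ENNReal.ofReal (A (|v x| / l)) ∂μ ≤ μ E}

/-- A Young function: continuous, convex, increasing on `[0,∞)`, vanishing at `0`,
with superlinear growth at infinity. -/
def IsYoung (A : ℝ → ℝ) : Prop :=
  ContinuousOn A (Set.Ici 0) ∧ ConvexOn ℝ (Set.Ici 0) A ∧ MonotoneOn A (Set.Ici 0) ∧
    A 0 = 0 ∧ Filter.Tendsto (fun t => A t / t) Filter.atTop Filter.atTop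

/-- The weight `u = Σ_{n≥2} n² log(e+n)⁻³ χ_{(eⁿ+n−1, eⁿ+n)}`. -/
noncomputable def exU : ℝ → ℝ := fun x =>
  ∑' n : ℕ, if 2 ≤ n then
    Set.indicator (Set.Ioo (Real.exp n + n - 1) (Real.exp n + n))
      (fun _ => (n : ℝ) ^ 2 / Real.log (Real.exp 1 + n) ^ 3) x
  else 0

/-- The weight `σ = Σ_{n≥2} χ_{(eⁿ, eⁿ+1)}`. -/
noncomputable def exSigma : ℝ → ℝ := fun x =>
  ∑' n : ℕ, if 2 ≤ n then
    Set.indicator (Set.Ioo (Real.exp n) (Real.exp n + 1)) (fun _ => (1 : ℝ)) x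
  else 0

/-- The log-bump `Φ(t) = t log(e+t)²`. -/
noncomputable def exPhi : ℝ → ℝ := fun t => t * Real.log (Real.exp 1 + t) ^ 2

noncomputable def vv (n : ℕ) : ℝ := (n:ℝ)^2 / Real.log (Real.exp 1 + n) ^ 3

lemma logE (t : ℝ) (ht : 0 ≤ t) : 1 ≤ Real.log (Real.exp 1 + t) := by
  rw [Real.le_log_iff_exp_le (by positivity)]
  linarith

lemma logE_mono {s t : ℝ} (hs : 0 ≤ s) (hst : s ≤ t) :
    Real.log (Real.exp 1 + s) ≤ Real.log (Real.exp 1 + t) :=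
  Real.log_le_log (by positivity) (by linarith)

lemma phi_nonneg {t : ℝ} (ht : 0 ≤ t) : 0 ≤ exPhi t := by
  unfold exPhi; positivity

lemma phi_mono {s t : ℝ} (hs : 0 ≤ s) (hst : s ≤ t) : exPhi s ≤ exPhi t := by
  unfold exPhi
  apply mul_le_mul hst _ (by positivity) (by linarith)
  have h1 := logE s hs
  have h2 := logE_mono hs hst
  nlinarith

lemma phi_div {t l : ℝ} (ht : 0 ≤ t) (hl : 1 ≤ l) : exPhi (t / l) ≤ exPhi t / l := by
  unfold exPhi
  have hl0 : 0 < l := by linarith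
  have htl : 0 ≤ t / l := by positivity
  have h2 : t / l ≤ t := by
    rw [div_le_iff₀ hl0]; nlinarith
  have h1 := logE (t/l) htl
  have h3 := logE_mono htl h2
  have hsq : Real.log (Real.exp 1 + t/l)^2 ≤ Real.log (Real.exp 1 + t)^2 := by nlinarith
  calc t/l * Real.log (Real.exp 1 + t/l)^2 ≤ t/l * Real.log (Real.exp 1 + t)^2 :=
        mul_le_mul_of_nonneg_left hsq htl
    _ = t * Real.log (Real.exp 1 + t)^2 / l := by ring

lemma vv_nonneg (n : ℕ) : 0 ≤ vv n := by
  unfold vv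
  have := logE n (by positivity)
  positivity

lemma vv_le (n : ℕ) : vv n ≤ (n:ℝ)^2 := by
  unfold vv
  have h := logE n (by positivity)
  rw [div_le_iff₀ (by positivity)]
  nlinarith [sq_nonneg (n:ℝ), sq_nonneg ((n:ℝ)*(Real.log (Real.exp 1 + n) - 1)), sq_nonneg ((n:ℝ)*(Real.log (Real.exp 1 + n) + 1))]

lemma phi_vv_le (n : ℕ) : exPhi (vv n) ≤ 4 * (n:ℝ)^2 := by
  have h := logE n (by positivity)
  have hv := vv_nonneg n
  have hvn := vv_le n
  have hlog : Real.log (Real.exp 1 + vv n) ≤ 2 * Real.log (Real.exp 1 + n) := by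
    calc Real.log (Real.exp 1 + vv n) ≤ Real.log (Real.exp 1 + (n:ℝ)^2) := logE_mono hv hvn
    _ ≤ Real.log ((Real.exp 1 + n)^2) := by
        apply Real.log_le_log (by positivity)
        have he := Real.exp_pos 1
        nlinarith [Real.add_one_le_exp (1:ℝ), mul_nonneg he.le (Nat.cast_nonneg n : (0:ℝ) ≤ n)]
    _ = 2 * Real.log (Real.exp 1 + n) := by
        rw [Real.log_pow]; push_cast; ring
  have hlv : 0 ≤ Real.log (Real.exp 1 + vv n) := by linarith [logE (vv n) hv]
  unfold exPhi
  calc vv n * Real.log (Real.exp 1 + vv n) ^ 2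
      ≤ vv n * (2 * Real.log (Real.exp 1 + n))^2 := by
        apply mul_le_mul_of_nonneg_left _ hv
        nlinarith
    _ = (n:ℝ)^2 / Real.log (Real.exp 1 + n)^3 * (4 * Real.log (Real.exp 1 + n)^2) := by
        unfold vv; ring
    _ ≤ 4 * (n:ℝ)^2 := by
        rw [div_mul_eq_mul_div, div_le_iff₀ (by positivity)]
        nlinarith [mul_nonneg (mul_nonneg (sq_nonneg (n:ℝ)) (sq_nonneg (Real.log (Real.exp 1 + n)))) (by linarith : (0:ℝ) ≤ Real.log (Real.exp 1 + n) - 1)]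

-- interval abbreviations
noncomputable def II (n : ℕ) : Set ℝ := Set.Ioo (Real.exp n + n - 1) (Real.exp n + n)
noncomputable def JJ (n : ℕ) : Set ℝ := Set.Ioo (Real.exp n) (Real.exp n + 1)

lemma exp_nat_ge (n : ℕ) : (n:ℝ) + 1 ≤ Real.exp n := Real.add_one_le_exp n

lemma II_disj {m n : ℕ} (hmn : m ≠ n) {x : ℝ} (hx : x ∈ II n) : x ∉ II m := by
  intro hxm
  rcases lt_or_gt_of_ne hmn with h | h
  · -- m < n : e^m + m ≤ e^n + n - 1
    have he : Real.exp m < Real.exp n := Real.exp_lt_exp.2 (by exact_mod_cast h)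
    have hc : (m:ℝ) + 1 ≤ n := by exact_mod_cast h
    have := hx.1; have := hxm.2
    simp only [II, Set.mem_Ioo] at hx hxm
    linarith [hx.1, hxm.2]
  · have he : Real.exp n < Real.exp m := Real.exp_lt_exp.2 (by exact_mod_cast h)
    have hc : (n:ℝ) + 1 ≤ m := by exact_mod_cast h
    simp only [II, Set.mem_Ioo] at hx hxm
    linarith [hx.2, hxm.1]

lemma JJ_disj {m n : ℕ} (hmn : m ≠ n) {x : ℝ} (hx : x ∈ JJ n) : x ∉ JJ m := by
  intro hxm
  simp only [JJ, Set.mem_Ioo] at hx hxm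
  rcases lt_or_gt_of_ne hmn with h | h
  · -- m < n : e^m + 1 ≤ e^n
    have hc : (m:ℝ) + 1 ≤ n := by exact_mod_cast h
    have h1 : Real.exp m * Real.exp 1 ≤ Real.exp n := by
      rw [← Real.exp_add]
      exact Real.exp_le_exp.2 (by linarith)
    have h2 : (1:ℝ) ≤ Real.exp m := by linarith [exp_nat_ge m, (Nat.cast_nonneg m : (0:ℝ) ≤ m)]
    have h3 : (2:ℝ) ≤ Real.exp 1 := by linarith [Real.add_one_le_exp (1:ℝ)]
    nlinarith [hx.1, hxm.2]
  · have hc : (n:ℝ) + 1 ≤ m := by exact_mod_cast h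
    have h1 : Real.exp n * Real.exp 1 ≤ Real.exp m := by
      rw [← Real.exp_add]
      exact Real.exp_le_exp.2 (by linarith)
    have h2 : (1:ℝ) ≤ Real.exp n := by linarith [exp_nat_ge n, (Nat.cast_nonneg n : (0:ℝ) ≤ n)]
    have h3 : (2:ℝ) ≤ Real.exp 1 := by linarith [Real.add_one_le_exp (1:ℝ)]
    nlinarith [hx.2, hxm.1]

lemma exU_eq {n : ℕ} (hn : 2 ≤ n) {x : ℝ} (hx : x ∈ II n) : exU x = vv n := by
  have hx' : ∀ m : ℕ, m ≠ n → x ∉ Set.Ioo (Real.exp m + m - 1) (Real.exp m + m) :=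
    fun m hmn => II_disj hmn hx
  unfold II at hx
  unfold exU
  rw [tsum_eq_single n]
  · rw [if_pos hn, Set.indicator_of_mem hx]
    rfl
  · intro m hmn
    by_cases hm : 2 ≤ m
    · rw [if_pos hm, Set.indicator_of_notMem (hx' m hmn)]
    · rw [if_neg hm]

lemma exU_zero {x : ℝ} (hx : ∀ n : ℕ, 2 ≤ n → x ∉ II n) : exU x = 0 := by
  unfold II at hx
  unfold exU
  convert tsum_zero with n
  by_cases hm : 2 ≤ n
  · rw [if_pos hm, Set.indicator_of_notMem (hx n hm)]
  · rw [if_neg hm]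

lemma exSigma_eq_indicator :
    exSigma = Set.indicator (⋃ n ∈ {n : ℕ | 2 ≤ n}, JJ n) (fun _ => (1:ℝ)) := by
  funext x
  by_cases h : ∃ n : ℕ, 2 ≤ n ∧ x ∈ JJ n
  · obtain ⟨n, hn, hxn⟩ := h
    have hU : x ∈ ⋃ n ∈ {n : ℕ | 2 ≤ n}, JJ n := by
      exact Set.mem_biUnion hn hxn
    rw [Set.indicator_of_mem hU]
    have hx' : ∀ m : ℕ, m ≠ n → x ∉ Set.Ioo (Real.exp m) (Real.exp m + 1) :=
      fun m hmn => JJ_disj hmn hxn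
    unfold JJ at hxn
    unfold exSigma
    rw [tsum_eq_single n]
    · rw [if_pos hn, Set.indicator_of_mem hxn]
    · intro m hmn
      by_cases hm : 2 ≤ m
      · rw [if_pos hm, Set.indicator_of_notMem (hx' m hmn)]
      · rw [if_neg hm]
  · push_neg at h
    have hU : x ∉ ⋃ n ∈ {n : ℕ | 2 ≤ n}, JJ n := by
      simp only [Set.mem_iUnion, Set.mem_setOf_eq, not_exists]
      intro n hn
      exact h n hn
    rw [Set.indicator_of_notMem hU]
    unfold JJ at h
    unfold exSigma
    convert tsum_zero with n
    by_cases hm : 2 ≤ n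
    · rw [if_pos hm, Set.indicator_of_notMem (h n hm)]
    · rw [if_neg hm]

lemma exSigma_nonneg (x : ℝ) : 0 ≤ exSigma x := by
  rw [exSigma_eq_indicator]
  apply Set.indicator_nonneg
  intro _ _; norm_num

lemma exSigma_le_one (x : ℝ) : exSigma x ≤ 1 := by
  rw [exSigma_eq_indicator]
  apply Set.indicator_le' (fun _ _ => le_rfl) (fun _ _ => zero_le_one)

lemma exSigma_measurable : Measurable exSigma := by
  rw [exSigma_eq_indicator]
  exact (measurable_const.indicator (MeasurableSet.biUnion (Set.to_countable _)
    (fun n _ => measurableSet_Ioo)))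

lemma sum_sq_le (M : ℕ) : (∑ n ∈ Finset.Icc 2 M, (n:ℝ)^2) ≤ (M:ℝ)^3 := by
  induction M with
  | zero => simp
  | succ M ih =>
    by_cases hM : 2 ≤ M + 1
    · rw [Finset.sum_Icc_succ_top hM]
      have : ((M:ℝ)+1)^2 ≤ ((M:ℝ)+1)^3 - (M:ℝ)^3 := by nlinarith [(Nat.cast_nonneg M : (0:ℝ) ≤ M)]
      push_cast
      push_cast at ih
      linarith
    · have : M + 1 < 2 := by omega
      rw [Finset.Icc_eq_empty (by omega)]
      simp; positivity

lemma cube_le_exp {M : ℕ} (hM : 2 ≤ M) : (M:ℝ)^3 ≤ 27/20 * Real.exp M := by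
  have he : (2.7182818283 : ℝ) < Real.exp 1 := Real.exp_one_gt_d9
  induction M with
  | zero => omega
  | succ M ih =>
    by_cases h3 : 3 ≤ M + 1
    · by_cases hM3 : M + 1 = 3
      · rw [hM3]
        have h2 : Real.exp 3 = Real.exp 1 * Real.exp 1 * Real.exp 1 := by
          rw [← Real.exp_add, ← Real.exp_add]; norm_num
        push_cast
        rw [h2]
        nlinarith
      · have hM2 : 3 ≤ M := by omega
        have ih' := ih (by omega)
        have hexp : Real.exp (M+1 : ℕ) = Real.exp M * Real.exp 1 := by
          push_cast
          rw [← Real.exp_add]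
        have hstep : ((M:ℝ)+1)^3 ≤ 64/27 * (M:ℝ)^3 := by
          have h3' : (3:ℝ) ≤ M := by exact_mod_cast hM2
          nlinarith [mul_nonneg (sub_nonneg.2 h3') (by positivity : (0:ℝ) ≤ 37*(M:ℝ)^2+30*M+9)]
        have hM0 : (0:ℝ) ≤ (M:ℝ)^3 := by positivity
        have hee : Real.exp M > 0 := Real.exp_pos _
        push_cast
        push_cast at hexp ih'
        rw [hexp]
        nlinarith
    · have : M + 1 = 2 := by omega
      rw [this]
      have h2 : Real.exp 2 = Real.exp 1 * Real.exp 1 := by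
        rw [← Real.exp_add]; norm_num
      push_cast
      rw [h2]
      nlinarith

lemma exSigma_integrable {a b : ℝ} :
    IntegrableOn exSigma (Set.Ioo a b) volume := by
  apply Integrable.mono' (integrable_const (1:ℝ))
  · exact (exSigma_measurable.aestronglyMeasurable).restrict
  · filter_upwards with x
    rw [Real.norm_eq_abs, abs_of_nonneg (exSigma_nonneg x)]
    exact exSigma_le_one x

lemma sigma_int_nonneg {a b : ℝ} : 0 ≤ ∫ x in Set.Ioo a b, exSigma x :=
  setIntegral_nonneg measurableSet_Ioo (fun x _ => exSigma_nonneg x)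

lemma sigma_int_le {a b : ℝ} (hab : a < b) : (∫ x in Set.Ioo a b, exSigma x) ≤ b - a := by
  have : (∫ x in Set.Ioo a b, exSigma x) ≤ ∫ _x in Set.Ioo a b, (1:ℝ) := by
    apply setIntegral_mono_on exSigma_integrable (integrable_const 1) measurableSet_Ioo
    exact fun x _ => exSigma_le_one x
  rw [setIntegral_const] at this
  simp only [Real.volume_Ioo, smul_eq_mul, mul_one] at this
  rwa [measureReal_def, Real.volume_Ioo, ENNReal.toReal_ofReal (by linarith)] at this

lemma luxNorm_le {a b l : ℝ} (hab : a < b) (hl : 0 < l)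
    (h : ∫⁻ x in Set.Ioo a b, ENNReal.ofReal (exPhi (|exU x| / l)) ≤ volume (Set.Ioo a b)) :
    luxNorm volume exPhi (Set.Ioo a b) exU ≤ l := by
  apply csInf_le ⟨0, fun y hy => le_of_lt hy.1⟩
  exact ⟨hl, h⟩

set_option maxHeartbeats 2000000

theorem separated_bump_holds :
    ∃ C : ℝ, 0 < C ∧ ∀ a b : ℝ, a < b →
      luxNorm volume exPhi (Set.Ioo a b) exU *
        ((b - a)⁻¹ * ∫ x in Set.Ioo a b, exSigma x) ≤ C := by
  refine ⟨40, by norm_num, ?_⟩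
  intro a b hab
  have hba : (0:ℝ) < b - a := sub_pos.2 hab
  have hf2nn : 0 ≤ (b - a)⁻¹ * ∫ x in Set.Ioo a b, exSigma x :=
    mul_nonneg (by positivity) sigma_int_nonneg
  have hf2le1 : (b - a)⁻¹ * (∫ x in Set.Ioo a b, exSigma x) ≤ 1 := by
    rw [inv_mul_le_iff₀ hba]
    linarith [sigma_int_le hab]
  rcases eq_or_lt_of_le (sigma_int_nonneg (a := a) (b := b)) with h0 | hpos
  · rw [← h0, mul_zero, mul_zero]; norm_num
  -- the set of σ-blocks meeting Q
  obtain ⟨S, hSdef⟩ : ∃ S : Set ℕ, S =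
      {m : ℕ | 2 ≤ m ∧ ∃ x, x ∈ Set.Ioo (Real.exp m) (Real.exp m + 1) ∧ x ∈ Set.Ioo a b} :=
    ⟨_, rfl⟩
  have hSne : S.Nonempty := by
    by_contra hS
    rw [Set.not_nonempty_iff_eq_empty] at hS
    have hz : ∀ x ∈ Set.Ioo a b, exSigma x = 0 := by
      intro x hx
      rw [exSigma_eq_indicator]
      apply Set.indicator_of_notMem
      intro hU
      simp only [Set.mem_iUnion, Set.mem_setOf_eq] at hU
      obtain ⟨m, hm, hxm⟩ := hU
      have : m ∈ S := by rw [hSdef]; exact ⟨hm, x, hxm, hx⟩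
      rw [hS] at this
      exact this
    have : (∫ x in Set.Ioo a b, exSigma x) = 0 := by
      rw [setIntegral_congr_fun measurableSet_Ioo hz, integral_zero]
    linarith
  have hSbdd : BddAbove S := by
    refine ⟨⌈b⌉₊, fun m hm => ?_⟩
    rw [hSdef] at hm
    obtain ⟨x, hxJ, hxQ⟩ := hm.2
    have h1 : (m:ℝ) < b := by
      have := exp_nat_ge m
      linarith [hxJ.1, hxQ.2]
    have h2 : (m:ℝ) ≤ (⌈b⌉₊ : ℝ) := le_trans h1.le (Nat.le_ceil b)
    exact_mod_cast h2
  obtain ⟨M, hMS, hMmax⟩ : ∃ M, M ∈ S ∧ ∀ m ∈ S, m ≤ M :=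
    ⟨sSup S, Nat.sSup_mem hSne hSbdd, fun m hm => le_csSup hSbdd hm⟩
  rw [hSdef] at hMS
  have hM2 : 2 ≤ M := hMS.1
  obtain ⟨x1, hx1J, hx1Q⟩ := hMS.2
  have hmem : ∀ m : ℕ, 2 ≤ m → (∃ x, x ∈ Set.Ioo (Real.exp m) (Real.exp m + 1) ∧ x ∈ Set.Ioo a b) → m ≤ M := by
    intro m h1 h2
    exact hMmax m (by rw [hSdef]; exact ⟨h1, h2⟩)
  have hE2 : (2:ℝ) ≤ Real.exp 1 := by linarith [Real.add_one_le_exp (1:ℝ)]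
  have hexpM1 : Real.exp ((M:ℝ) + 1) = Real.exp M * Real.exp 1 := by
    rw [← Real.exp_add]
  have hexpMpos : (0:ℝ) < Real.exp M := Real.exp_pos _
  -- Step 2 : b ≤ exp (M+1)
  have hble : b ≤ Real.exp ((M:ℝ) + 1) := by
    by_contra hb
    push_neg at hb
    have haM : a < Real.exp M + 1 := by linarith [hx1J.2, hx1Q.1]
    have hEM1 : Real.exp M + 1 ≤ Real.exp ((M:ℝ)+1) := by
      rw [hexpM1]
      have h1 : (1:ℝ) ≤ Real.exp M := by
        linarith [exp_nat_ge M, (Nat.cast_nonneg M : (0:ℝ) ≤ M)]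
      nlinarith
    have hd0 : 0 < min 1 (b - Real.exp ((M:ℝ)+1)) := lt_min one_pos (by linarith)
    have hdle1 := min_le_left 1 (b - Real.exp ((M:ℝ)+1))
    have hdleb := min_le_right 1 (b - Real.exp ((M:ℝ)+1))
    have : M + 1 ≤ M := by
      refine hmem (M+1) (by omega) ⟨Real.exp ((M:ℝ)+1) + min 1 (b - Real.exp ((M:ℝ)+1)) / 2, ?_, ?_⟩
      · constructor
        · push_cast; linarith
        · push_cast; linarith
      · constructor
        · linarith
        · linarith
    omega
  -- Step 3 : any u-block meeting Q has index ≤ M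
  have hIle : ∀ n : ℕ, 2 ≤ n → ∀ x ∈ Set.Ioo a b, x ∈ II n → n ≤ M := by
    intro n hn x hxQ hxI
    have hn2 : (2:ℝ) ≤ n := by exact_mod_cast hn
    have h1 : Real.exp n < b := by
      unfold II at hxI
      linarith [hxI.1, hxQ.2]
    have h2 : Real.exp (n:ℝ) < Real.exp ((M:ℝ)+1) := lt_of_lt_of_le h1 hble
    have h3 : (n:ℝ) < (M:ℝ) + 1 := by
      exact_mod_cast Real.exp_lt_exp.1 h2
    have : (n:ℝ) < (M+1 : ℕ) := by push_cast; linarith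
    have : n < M + 1 := by exact_mod_cast this
    omega
  by_cases h6 : Real.exp M / 6 ≤ b - a
  · -- Case (i): Q is long
    have hlux : luxNorm volume exPhi (Set.Ioo a b) exU ≤ 40 := by
      apply luxNorm_le hab (by norm_num)
      set g : ℝ → ENNReal := fun x => ∑ n ∈ Finset.Icc 2 M,
          Set.indicator (Set.Ioo (Real.exp n + n - 1) (Real.exp n + n))
            (fun _ => ENNReal.ofReal (exPhi (vv n) / 40)) x with hgdef
      have hgmeas : Measurable g :=
        Finset.measurable_sum _ (fun n _ => measurable_const.indicator measurableSet_Ioo)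
      have hfg : ∀ x ∈ Set.Ioo a b, ENNReal.ofReal (exPhi (|exU x| / 40)) ≤ g x := by
        intro x hx
        by_cases hex : ∃ n : ℕ, 2 ≤ n ∧ x ∈ II n
        · obtain ⟨n, hn, hxn⟩ := hex
          have hnM := hIle n hn x hx hxn
          rw [exU_eq hn hxn, abs_of_nonneg (vv_nonneg n)]
          have h1 : ENNReal.ofReal (exPhi (vv n / 40)) ≤ ENNReal.ofReal (exPhi (vv n) / 40) :=
            ENNReal.ofReal_le_ofReal (phi_div (vv_nonneg n) (by norm_num))
          refine h1.trans ?_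
          have heq : Set.indicator (Set.Ioo (Real.exp n + n - 1) (Real.exp n + n))
              (fun _ => ENNReal.ofReal (exPhi (vv n) / 40)) x
              = ENNReal.ofReal (exPhi (vv n) / 40) := Set.indicator_of_mem hxn _
          rw [hgdef, ← heq]
          exact Finset.single_le_sum
            (f := fun n : ℕ => Set.indicator (Set.Ioo (Real.exp n + n - 1) (Real.exp n + n))
              (fun _ => ENNReal.ofReal (exPhi (vv n) / 40)) x)
            (fun i _ => zero_le) (Finset.mem_Icc.2 ⟨hn, hnM⟩)
        · push_neg at hex
          rw [exU_zero (fun n hn => hex n hn), abs_zero]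
          have h0 : exPhi (0 / 40) = 0 := by norm_num [exPhi]
          rw [h0, ENNReal.ofReal_zero]
          exact zero_le
      calc ∫⁻ x in Set.Ioo a b, ENNReal.ofReal (exPhi (|exU x| / 40))
          ≤ ∫⁻ x in Set.Ioo a b, g x := setLIntegral_mono hgmeas hfg
        _ ≤ ∫⁻ x, g x := setLIntegral_le_lintegral _ _
        _ = ∑ n ∈ Finset.Icc 2 M, ENNReal.ofReal (exPhi (vv n) / 40)
              * volume (Set.Ioo (Real.exp n + n - 1) (Real.exp n + n)) := by
            rw [hgdef, lintegral_finset_sum _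
              (fun n _ => measurable_const.indicator measurableSet_Ioo)]
            exact Finset.sum_congr rfl (fun n _ => lintegral_indicator_const measurableSet_Ioo _)
        _ = ∑ n ∈ Finset.Icc 2 M, ENNReal.ofReal (exPhi (vv n) / 40) := by
            apply Finset.sum_congr rfl
            intro n _
            rw [Real.volume_Ioo]
            have : Real.exp n + n - (Real.exp n + n - 1) = 1 := by ring
            rw [this, ENNReal.ofReal_one, mul_one]
        _ = ENNReal.ofReal (∑ n ∈ Finset.Icc 2 M, exPhi (vv n) / 40) :=
            (ENNReal.ofReal_sum_of_nonneg
              (fun n _ => by linarith [phi_nonneg (vv_nonneg n)] )).symm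
        _ ≤ volume (Set.Ioo a b) := by
            rw [Real.volume_Ioo]
            apply ENNReal.ofReal_le_ofReal
            have hsum1 : (∑ n ∈ Finset.Icc 2 M, exPhi (vv n) / 40)
                ≤ ∑ n ∈ Finset.Icc 2 M, 4 * (n:ℝ)^2 / 40 := by
              apply Finset.sum_le_sum
              intro n _
              have := phi_vv_le n
              linarith
            have hsum2 : (∑ n ∈ Finset.Icc 2 M, 4 * (n:ℝ)^2 / 40)
                = (∑ n ∈ Finset.Icc 2 M, (n:ℝ)^2) / 10 := by
              rw [Finset.sum_div]
              exact Finset.sum_congr rfl (fun n _ => by ring)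
            have h3 := sum_sq_le M
            have h4 := cube_le_exp hM2
            calc (∑ n ∈ Finset.Icc 2 M, exPhi (vv n) / 40)
                ≤ (∑ n ∈ Finset.Icc 2 M, (n:ℝ)^2) / 10 := by rw [← hsum2]; exact hsum1
              _ ≤ (M:ℝ)^3 / 10 := by linarith
              _ ≤ 27/200 * Real.exp M := by linarith
              _ ≤ b - a := by linarith
    calc luxNorm volume exPhi (Set.Ioo a b) exU * ((b - a)⁻¹ * ∫ x in Set.Ioo a b, exSigma x)
        ≤ 40 * ((b - a)⁻¹ * ∫ x in Set.Ioo a b, exSigma x) :=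
          mul_le_mul_of_nonneg_right hlux hf2nn
      _ ≤ 40 * 1 := mul_le_mul_of_nonneg_left hf2le1 (by norm_num)
      _ = 40 := mul_one 40
  · -- Case (ii): Q is short
    push_neg at h6
    have ha5 : 5/6 * Real.exp M < a := by
      linarith [hx1J.1, hx1Q.1, hx1Q.2]
    have hE : (2.7182818283:ℝ) < Real.exp 1 := Real.exp_one_gt_d9
    -- Claim A : the only u-block meeting Q is the M-th one
    have hIonly : ∀ n : ℕ, 2 ≤ n → ∀ x ∈ Set.Ioo a b, x ∈ II n → n = M := by
      intro n hn x hxQ hxI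
      have hnM := hIle n hn x hxQ hxI
      by_contra hne
      have hnM' : n + 1 ≤ M := by omega
      have hA : Real.exp 1 * Real.exp n ≤ Real.exp M := by
        rw [← Real.exp_add]
        apply Real.exp_le_exp.2
        have : ((n:ℝ) + 1) ≤ M := by exact_mod_cast hnM'
        linarith
      have hB : Real.exp 1 * ((n:ℝ) + 1) ≤ Real.exp M := by
        calc Real.exp 1 * ((n:ℝ)+1) ≤ Real.exp 1 * Real.exp n :=
              mul_le_mul_of_nonneg_left (exp_nat_ge n) (Real.exp_pos 1).le
          _ ≤ Real.exp M := hA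
      have hxu : x < Real.exp n + n := by
        unfold II at hxI; exact hxI.2
      have hax : a < x := hxQ.1
      have k1 : Real.exp 1 * a < Real.exp 1 * x :=
        mul_lt_mul_of_pos_left hax (Real.exp_pos 1)
      have k2 : Real.exp 1 * x < Real.exp 1 * (Real.exp n + n) :=
        mul_lt_mul_of_pos_left hxu (Real.exp_pos 1)
      rw [mul_add] at k2
      have k3 : Real.exp 1 * (5/6 * Real.exp M) < Real.exp 1 * a :=
        mul_lt_mul_of_pos_left ha5 (Real.exp_pos 1)
      rw [mul_add, mul_one] at hB
      have h5 : 0 < (5/6 * Real.exp 1 - 2) * Real.exp M :=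
        mul_pos (by linarith) hexpMpos
      have he1 := Real.exp_pos 1
      nlinarith [k1, k2, k3, hA, hB, h5]
    -- Claim B : the only σ-block meeting Q is the M-th one
    have hJonly : ∀ m : ℕ, 2 ≤ m → ∀ x ∈ Set.Ioo a b, x ∈ JJ m → m = M := by
      intro m hm x hxQ hxJ
      have hmM : m ≤ M := hmem m hm ⟨x, hxJ, hxQ⟩
      by_contra hne
      have hmM' : m + 1 ≤ M := by omega
      have hA : Real.exp 1 * Real.exp m ≤ Real.exp M := by
        rw [← Real.exp_add]
        apply Real.exp_le_exp.2
        have : ((m:ℝ) + 1) ≤ M := by exact_mod_cast hmM'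
        linarith
      have hEM2 : Real.exp 1 * Real.exp 1 ≤ Real.exp M := by
        rw [← Real.exp_add]
        apply Real.exp_le_exp.2
        have : ((2:ℕ):ℝ) ≤ M := by exact_mod_cast hM2
        push_cast at this ⊢
        linarith
      have hxu : x < Real.exp m + 1 := hxJ.2
      have hax : a < x := hxQ.1
      have k1 : Real.exp 1 * a < Real.exp 1 * x :=
        mul_lt_mul_of_pos_left hax (Real.exp_pos 1)
      have k2 : Real.exp 1 * x < Real.exp 1 * (Real.exp m + 1) :=
        mul_lt_mul_of_pos_left hxu (Real.exp_pos 1)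
      rw [mul_add, mul_one] at k2
      have k3 : Real.exp 1 * (5/6 * Real.exp M) < Real.exp 1 * a :=
        mul_lt_mul_of_pos_left ha5 (Real.exp_pos 1)
      have h5 : 0 < (5/6 * Real.exp 1 - 2) * Real.exp M :=
        mul_pos (by linarith) hexpMpos
      have h7 : Real.exp 1 < Real.exp 1 * Real.exp 1 := by
        have := mul_lt_mul_of_pos_right (show (1:ℝ) < Real.exp 1 by linarith) (Real.exp_pos 1)
        rwa [one_mul] at this
      have he1 := Real.exp_pos 1
      nlinarith [k1, k2, k3, hA, hEM2, h5, h7]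
    -- σ is dominated on Q by the indicator of the M-th block
    have hσind : ∀ x ∈ Set.Ioo a b,
        exSigma x ≤ Set.indicator (Set.Ioo (Real.exp M) (Real.exp M + 1)) (fun _ => (1:ℝ)) x := by
      intro x hx
      rw [exSigma_eq_indicator]
      by_cases hU : x ∈ ⋃ n ∈ {n : ℕ | 2 ≤ n}, JJ n
      · simp only [Set.mem_iUnion, Set.mem_setOf_eq] at hU
        obtain ⟨m, hm, hxm⟩ := hU
        have := hJonly m hm x hx hxm
        subst this
        have hxU : x ∈ ⋃ n ∈ {n : ℕ | 2 ≤ n}, JJ n := Set.mem_biUnion hm hxm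
        unfold JJ at hxm
        rw [Set.indicator_of_mem hxU, Set.indicator_of_mem hxm]
      · rw [Set.indicator_of_notMem hU]
        apply Set.indicator_nonneg
        intro _ _; norm_num
    have hσ1 : (∫ x in Set.Ioo a b, exSigma x) ≤ 1 := by
      have step : (∫ x in Set.Ioo a b, exSigma x)
          ≤ ∫ x in Set.Ioo a b,
            Set.indicator (Set.Ioo (Real.exp M) (Real.exp M + 1)) (fun _ => (1:ℝ)) x := by
        apply setIntegral_mono_on exSigma_integrable _ measurableSet_Ioo hσind
        exact (integrable_const 1).indicator measurableSet_Ioo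
      have heval : (∫ x in Set.Ioo a b,
            Set.indicator (Set.Ioo (Real.exp M) (Real.exp M + 1)) (fun _ => (1:ℝ)) x)
          = ((volume.restrict (Set.Ioo a b)) (Set.Ioo (Real.exp M) (Real.exp M + 1))).toReal := by
        rw [integral_indicator_const (1:ℝ) measurableSet_Ioo, smul_eq_mul, mul_one]; rfl
      have hle : ((volume.restrict (Set.Ioo a b)) (Set.Ioo (Real.exp M) (Real.exp M + 1)))
          ≤ ENNReal.ofReal 1 := by
        rw [Measure.restrict_apply measurableSet_Ioo]
        calc volume (Set.Ioo (Real.exp M) (Real.exp M + 1) ∩ Set.Ioo a b)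
            ≤ volume (Set.Ioo (Real.exp M) (Real.exp M + 1)) :=
              measure_mono Set.inter_subset_left
          _ = ENNReal.ofReal 1 := by rw [Real.volume_Ioo]; norm_num
      have : ((volume.restrict (Set.Ioo a b)) (Set.Ioo (Real.exp M) (Real.exp M + 1))).toReal
          ≤ 1 := by
        have := ENNReal.toReal_mono (by norm_num) hle
        rwa [ENNReal.toReal_ofReal (by norm_num)] at this
      linarith
    by_cases hIQ : ∃ x, x ∈ Set.Ioo a b ∧ x ∈ II M
    · -- (ii-b) : Q meets the M-th u-block
      obtain ⟨x0, hx0Q, hx0I⟩ := hIQ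
      have hgap : (M:ℝ) - 2 < b - a := by
        unfold II at hx0I
        linarith [hx0I.1, hx0Q.2, hx1Q.1, hx1J.2]
      by_cases hM3 : 3 ≤ M
      · -- M ≥ 3 : choose l = vv M / w with w = (M-2)/log(e+M)^2
        have hM3R : (3:ℝ) ≤ M := by exact_mod_cast hM3
        obtain ⟨L, hLdef⟩ : ∃ L : ℝ, L = Real.log (Real.exp 1 + M) := ⟨_, rfl⟩
        have hL1 : 1 ≤ L := by rw [hLdef]; exact logE M (Nat.cast_nonneg M)
        have hL0 : 0 < L := by linarith
        obtain ⟨w, hwdef⟩ : ∃ w : ℝ, w = ((M:ℝ) - 2) / L^2 := ⟨_, rfl⟩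
        have hw0 : 0 < w := by rw [hwdef]; apply div_pos (by linarith) (by positivity)
        have hv0 : 0 < vv M := by
          have hM0 : (0:ℝ) < (M:ℝ) := by linarith
          unfold vv
          rw [show Real.log (Real.exp 1 + (M:ℝ)) = L from hLdef.symm]
          exact div_pos (by positivity) (by positivity)
        have hl0 : 0 < vv M / w := div_pos hv0 hw0
        have hwle : w ≤ (M:ℝ) - 2 := by
          rw [hwdef, div_le_iff₀ (by positivity)]
          nlinarith [mul_nonneg (by linarith : (0:ℝ) ≤ (M:ℝ)-2) (by nlinarith : (0:ℝ) ≤ L^2 - 1)]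
        have hphiw : exPhi w ≤ (M:ℝ) - 2 := by
          have hlw : Real.log (Real.exp 1 + w) ≤ L := by
            rw [hLdef]
            exact logE_mono hw0.le (by linarith)
          have hlw0 : 1 ≤ Real.log (Real.exp 1 + w) := logE w hw0.le
          have : exPhi w ≤ w * L^2 := by
            unfold exPhi
            apply mul_le_mul_of_nonneg_left _ hw0.le
            nlinarith
          have hwL : w * L^2 = (M:ℝ) - 2 := by
            rw [hwdef]; field_simp
          linarith
        have hvl : vv M / (vv M / w) = w := by
          field_simp
        have hlux : luxNorm volume exPhi (Set.Ioo a b) exU ≤ vv M / w := by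
          apply luxNorm_le hab hl0
          have hfg : ∀ x ∈ Set.Ioo a b, ENNReal.ofReal (exPhi (|exU x| / (vv M / w)))
              ≤ Set.indicator (Set.Ioo (Real.exp M + M - 1) (Real.exp M + M))
                  (fun _ => ENNReal.ofReal ((M:ℝ) - 2)) x := by
            intro x hx
            by_cases hex : ∃ n : ℕ, 2 ≤ n ∧ x ∈ II n
            · obtain ⟨n, hn, hxn⟩ := hex
              have hnM := hIonly n hn x hx hxn
              subst hnM
              rw [exU_eq hn hxn, abs_of_nonneg (vv_nonneg n), hvl]
              have hxn' : x ∈ Set.Ioo (Real.exp n + n - 1) (Real.exp n + n) := hxn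
              rw [Set.indicator_of_mem hxn']
              exact ENNReal.ofReal_le_ofReal hphiw
            · push_neg at hex
              rw [exU_zero (fun n hn => hex n hn), abs_zero]
              have h0 : exPhi (0 / (vv M / w)) = 0 := by
                rw [zero_div]; norm_num [exPhi]
              rw [h0, ENNReal.ofReal_zero]
              exact zero_le
          calc ∫⁻ x in Set.Ioo a b, ENNReal.ofReal (exPhi (|exU x| / (vv M / w)))
              ≤ ∫⁻ x in Set.Ioo a b, Set.indicator (Set.Ioo (Real.exp M + M - 1) (Real.exp M + M))
                  (fun _ => ENNReal.ofReal ((M:ℝ) - 2)) x :=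
                setLIntegral_mono (measurable_const.indicator measurableSet_Ioo) hfg
            _ = ENNReal.ofReal ((M:ℝ) - 2)
                  * (volume.restrict (Set.Ioo a b)) (Set.Ioo (Real.exp M + M - 1) (Real.exp M + M)) :=
                lintegral_indicator_const measurableSet_Ioo _
            _ ≤ ENNReal.ofReal ((M:ℝ) - 2) * ENNReal.ofReal 1 := by
                apply mul_le_mul_right
                rw [Measure.restrict_apply measurableSet_Ioo]
                calc volume (Set.Ioo (Real.exp M + M - 1) (Real.exp M + M) ∩ Set.Ioo a b)
                    ≤ volume (Set.Ioo (Real.exp M + M - 1) (Real.exp M + M)) :=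
                      measure_mono Set.inter_subset_left
                  _ = ENNReal.ofReal 1 := by
                      rw [Real.volume_Ioo]
                      norm_num
            _ = ENNReal.ofReal ((M:ℝ) - 2) := by rw [ENNReal.ofReal_one, mul_one]
            _ ≤ volume (Set.Ioo a b) := by
                rw [Real.volume_Ioo]
                exact ENNReal.ofReal_le_ofReal hgap.le
        have hf2' : (b - a)⁻¹ * (∫ x in Set.Ioo a b, exSigma x) ≤ ((M:ℝ) - 2)⁻¹ := by
          have h1 : (b - a)⁻¹ * (∫ x in Set.Ioo a b, exSigma x) ≤ (b - a)⁻¹ * 1 :=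
            mul_le_mul_of_nonneg_left hσ1 (by positivity)
          have h2 : (b - a)⁻¹ ≤ ((M:ℝ) - 2)⁻¹ := by
            apply inv_anti₀ (by linarith) hgap.le
          linarith
        have hkey : vv M / w * ((M:ℝ) - 2)⁻¹ ≤ 9 := by
          have hpos2 : (0:ℝ) < (M:ℝ) - 2 := by linarith
          have hM2ne : ((M:ℝ) - 2) ≠ 0 := ne_of_gt hpos2
          have hvv : vv M = (M:ℝ)^2 / L^3 := by unfold vv; rw [hLdef]
          have hlval : vv M / w = (M:ℝ)^2 / (L * ((M:ℝ) - 2)) := by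
            rw [hvv, hwdef]
            field_simp
          rw [hlval, ← div_eq_mul_inv, div_div]
          rw [div_le_iff₀ (mul_pos (mul_pos hL0 hpos2) hpos2)]
          nlinarith [mul_nonneg (mul_nonneg (by linarith : (0:ℝ) ≤ L - 1) (by linarith : (0:ℝ) ≤ (M:ℝ)-2)) (by linarith : (0:ℝ) ≤ (M:ℝ)-2),
            mul_nonneg (by linarith : (0:ℝ) ≤ 2*(M:ℝ)-3) (by linarith : (0:ℝ) ≤ (M:ℝ)-3)]
        calc luxNorm volume exPhi (Set.Ioo a b) exU * ((b - a)⁻¹ * ∫ x in Set.Ioo a b, exSigma x)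
            ≤ (vv M / w) * ((b - a)⁻¹ * ∫ x in Set.Ioo a b, exSigma x) :=
              mul_le_mul_of_nonneg_right hlux hf2nn
          _ ≤ (vv M / w) * ((M:ℝ) - 2)⁻¹ := mul_le_mul_of_nonneg_left hf2' hl0.le
          _ ≤ 9 := hkey
          _ ≤ 40 := by norm_num
      · -- M = 2 : choose l = 16
        have hM2' : M = 2 := le_antisymm (Nat.lt_succ_iff.mp (not_le.mp hM3)) hM2
        have hphi16 : exPhi (vv M / 16) ≤ 1 := by
          subst hM2'
          have hv4 : vv 2 ≤ 4 := by
            have := vv_le 2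
            norm_num at this
            linarith
          have hE' : Real.exp 1 < 2.7182818286 := Real.exp_one_lt_d9
          have h1 : exPhi (vv 2 / 16) ≤ exPhi (vv 2) / 16 := phi_div (vv_nonneg 2) (by norm_num)
          have h2 : exPhi (vv 2) ≤ exPhi 4 := phi_mono (vv_nonneg 2) hv4
          have h3 : exPhi 4 ≤ 16 := by
            unfold exPhi
            have hlog : Real.log (Real.exp 1 + 4) ≤ 2 := by
              rw [show (2:ℝ) = Real.log (Real.exp 1 * Real.exp 1) by
                rw [← Real.exp_add, Real.log_exp]; norm_num]
              apply Real.log_le_log (by positivity)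
              nlinarith
            have hlog0 : 0 ≤ Real.log (Real.exp 1 + 4) := by
              linarith [logE 4 (by norm_num)]
            nlinarith
          linarith
        have hlux : luxNorm volume exPhi (Set.Ioo a b) exU ≤ 16 := by
          apply luxNorm_le hab (by norm_num)
          have hfg : ∀ x ∈ Set.Ioo a b, ENNReal.ofReal (exPhi (|exU x| / 16))
              ≤ Set.indicator (Set.Ioo (Real.exp M + M - 1) (Real.exp M + M))
                  (fun _ => (1:ENNReal)) x := by
            intro x hx
            by_cases hex : ∃ n : ℕ, 2 ≤ n ∧ x ∈ II n
            · obtain ⟨n, hn, hxn⟩ := hex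
              have hnM := hIonly n hn x hx hxn
              subst hnM
              rw [exU_eq hn hxn, abs_of_nonneg (vv_nonneg n)]
              have hxn' : x ∈ Set.Ioo (Real.exp n + n - 1) (Real.exp n + n) := hxn
              rw [Set.indicator_of_mem hxn']
              calc ENNReal.ofReal (exPhi (vv n / 16)) ≤ ENNReal.ofReal 1 :=
                    ENNReal.ofReal_le_ofReal hphi16
                _ = 1 := ENNReal.ofReal_one
            · push_neg at hex
              rw [exU_zero (fun n hn => hex n hn), abs_zero]
              have h0 : exPhi (0 / 16) = 0 := by norm_num [exPhi]
              rw [h0, ENNReal.ofReal_zero]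
              exact zero_le
          calc ∫⁻ x in Set.Ioo a b, ENNReal.ofReal (exPhi (|exU x| / 16))
              ≤ ∫⁻ x in Set.Ioo a b, Set.indicator (Set.Ioo (Real.exp M + M - 1) (Real.exp M + M))
                  (fun _ => (1:ENNReal)) x :=
                setLIntegral_mono (measurable_const.indicator measurableSet_Ioo) hfg
            _ = 1 * (volume.restrict (Set.Ioo a b)) (Set.Ioo (Real.exp M + M - 1) (Real.exp M + M)) :=
                lintegral_indicator_const measurableSet_Ioo _
            _ ≤ volume (Set.Ioo a b) := by
                rw [one_mul, Measure.restrict_apply measurableSet_Ioo]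
                exact measure_mono Set.inter_subset_right
        calc luxNorm volume exPhi (Set.Ioo a b) exU * ((b - a)⁻¹ * ∫ x in Set.Ioo a b, exSigma x)
            ≤ 16 * ((b - a)⁻¹ * ∫ x in Set.Ioo a b, exSigma x) :=
              mul_le_mul_of_nonneg_right hlux hf2nn
          _ ≤ 16 * 1 := mul_le_mul_of_nonneg_left hf2le1 (by norm_num)
          _ ≤ 40 := by norm_num
    · -- (ii-a) : u vanishes on Q
      push_neg at hIQ
      have hlux : luxNorm volume exPhi (Set.Ioo a b) exU ≤ 1 := by
        apply luxNorm_le hab one_pos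
        have hfg : ∀ x ∈ Set.Ioo a b, ENNReal.ofReal (exPhi (|exU x| / 1)) ≤ (0:ENNReal) := by
          intro x hx
          have hz : exU x = 0 := by
            apply exU_zero
            intro n hn hxn
            exact hIQ x hx ((hIonly n hn x hx hxn) ▸ hxn)
          rw [hz, abs_zero]
          have h0 : exPhi (0 / 1) = 0 := by norm_num [exPhi]
          rw [h0, ENNReal.ofReal_zero]
        calc ∫⁻ x in Set.Ioo a b, ENNReal.ofReal (exPhi (|exU x| / 1))
            ≤ ∫⁻ _x in Set.Ioo a b, (0:ENNReal) := setLIntegral_mono measurable_const hfg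
          _ = 0 := lintegral_zero
          _ ≤ volume (Set.Ioo a b) := zero_le
      calc luxNorm volume exPhi (Set.Ioo a b) exU * ((b - a)⁻¹ * ∫ x in Set.Ioo a b, exSigma x)
          ≤ 1 * ((b - a)⁻¹ * ∫ x in Set.Ioo a b, exSigma x) :=
            mul_le_mul_of_nonneg_right hlux hf2nn
        _ ≤ 1 * 1 := mul_le_mul_of_nonneg_left hf2le1 (by norm_num)
        _ ≤ 40 := by norm_num
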